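/- Positive invariance of the nonnegative orthant for the cholera metapopulation model: Let n ≥ 1 and let S, I, R, W : [0,∞) → ℝ^n be differentiable functions solving the cholera metapopulation system for all t ≥ 0. If the initial conditions satisfy S_i(0) > 0 for every i, and I_i(0) ≥ 0, R_i(0) ≥ 0, W_i(0) ≥ 0 for every i, then for all t ≥ 0 and every i = 1,…,n one has S_i(t) > 0, I_i(t) ≥ 0, R_i(t) ≥ 0 and W_i(t) ≥ 0. -/

import Mathlib

open Set Filter Topology

/-- Product lower bound: if both factors are ≥ -a and bounded by C in absolute
value, the product is ≥ -(a*C). -/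
lemma mul_lb_aux {a C u w : ℝ} (ha : 0 ≤ a) (hu : -a ≤ u) (huC : |u| ≤ C)
    (hw : -a ≤ w) (hwC : |w| ≤ C) : -(a * C) ≤ u * w := by
  obtain ⟨hu1, hu2⟩ := abs_le.1 huC
  obtain ⟨hw1, hw2⟩ := abs_le.1 hwC
  rcases le_or_gt 0 u with h | h
  · nlinarith
  · nlinarith

/-- Lower bound on a movement-matrix row sum acting on a vector bounded below
by `-a` whose `i`-th entry equals `-a`. -/
lemma row_sum_lb {n : ℕ} (m y : Fin n → ℝ) (i : Fin n) (a : ℝ) (ha : 0 ≤ a)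
    (hoff : ∀ j, j ≠ i → 0 ≤ m j) (hy : ∀ j, -a ≤ y j) (hyi : y i = -a) :
    -(a * ∑ j, |m j|) ≤ ∑ j, m j * y j := by
  have hterm : ∀ j : Fin n, -(a * |m j|) ≤ m j * y j := by
    intro j
    rcases eq_or_ne j i with rfl | hne
    · rw [hyi]
      have h1 := neg_abs_le (m j)
      have h2 := le_abs_self (m j)
      nlinarith
    · have h0 := hoff j hne
      have h1 := mul_le_mul_of_nonneg_left (hy j) h0
      rw [abs_of_nonneg h0]
      nlinarith
  calc -(a * ∑ j, |m j|) = ∑ j, -(a * |m j|) := by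
        rw [Finset.mul_sum, ← Finset.sum_neg_distrib]
      _ ≤ ∑ j, m j * y j := Finset.sum_le_sum (fun j _ => hterm j)

/-- Generic quasipositivity invariance lemma. -/
lemma quasipos_invariance {ι : Type*} [Fintype ι] [Nonempty ι] {T K : ℝ}
    (hK : 0 < K) {x f : ℝ → ι → ℝ}
    (hderiv : ∀ t ∈ Set.Icc (0:ℝ) T, ∀ i,
      HasDerivWithinAt (fun τ => x τ i) (f t i) (Set.Ici (0:ℝ)) t)
    (hx0 : ∀ i, 0 ≤ x 0 i)
    (hH : ∀ t ∈ Set.Icc (0:ℝ) T, ∀ a : ℝ, 0 < a → (∀ j, -a ≤ x t j) →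
      ∀ i, x t i = -a → -(K * a) ≤ f t i) :
    ∀ t ∈ Set.Icc (0:ℝ) T, ∀ i, 0 ≤ x t i := by
  have hcont : ∀ i, ContinuousOn (fun s => x s i) (Set.Icc 0 T) := fun i s hs =>
    ((hderiv s hs i).continuousWithinAt).mono Set.Icc_subset_Ici_self
  suffices hmain : ∀ ε : ℝ, 0 < ε → ∀ s ∈ Set.Icc (0:ℝ) T, ∀ i,
      -(ε * Real.exp (2*K*s)) < x s i by
    intro t ht i
    by_contra hneg
    push_neg at hneg
    have he : (0:ℝ) < Real.exp (2*K*t) := Real.exp_pos _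
    have hε₀ : (0:ℝ) < -(x t i) / (2 * Real.exp (2*K*t)) := by
      apply div_pos (by linarith) (by positivity)
    have h := hmain _ hε₀ t ht i
    have h2 : -(x t i) / (2 * Real.exp (2*K*t)) * Real.exp (2*K*t) = -(x t i)/2 := by
      field_simp
    rw [h2] at h
    linarith
  intro ε hε
  by_contra hc
  push_neg at hc
  obtain ⟨s₁, hs₁, i₁, hi₁⟩ := hc
  set ψ : ℝ → ℝ := fun s => -(ε * Real.exp (2*K*s)) with hψdef
  have hψcont : Continuous ψ := by
    apply Continuous.neg
    exact continuous_const.mul (Real.continuous_exp.comp (continuous_const.mul continuous_id))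
  set B : Set ℝ :=
    ⋃ i, (Set.Icc 0 T ∩ (fun s => x s i - ψ s) ⁻¹' Set.Iic 0) with hBdef
  have hBclosed : IsClosed B := by
    apply isClosed_iUnion_of_finite
    intro i
    exact ContinuousOn.preimage_isClosed_of_isClosed
      ((hcont i).sub hψcont.continuousOn) isClosed_Icc isClosed_Iic
  have hBmem : ∀ s, s ∈ B ↔ s ∈ Set.Icc (0:ℝ) T ∧ ∃ i, x s i ≤ ψ s := by
    intro s
    simp only [hBdef, Set.mem_iUnion, Set.mem_inter_iff, Set.mem_preimage, Set.mem_Iic,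
      sub_nonpos]
    tauto
  have hBne : B.Nonempty := ⟨s₁, (hBmem s₁).2 ⟨hs₁, i₁, hi₁⟩⟩
  have hbdd : BddBelow B := ⟨0, fun s hs => ((hBmem s).1 hs).1.1⟩
  set t₀ := sInf B with ht₀def
  have ht₀B : t₀ ∈ B := hBclosed.csInf_mem hBne hbdd
  obtain ⟨ht₀Icc, i₀, hle⟩ := (hBmem t₀).1 ht₀B
  have hlow : ∀ s, 0 ≤ s → s < t₀ → ∀ j, ψ s < x s j := by
    intro s hs hst j
    by_contra hcon
    push_neg at hcon
    have hsB : s ∈ B := (hBmem s).2 ⟨⟨hs, hst.le.trans ht₀Icc.2⟩, j, hcon⟩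
    exact absurd (csInf_le hbdd hsB) (not_le.2 hst)
  have ht₀pos : 0 < t₀ := by
    rcases lt_or_eq_of_le ht₀Icc.1 with h | h
    · exact h
    · exfalso
      have h0 : ψ 0 = -ε := by simp [hψdef]
      have := hx0 i₀
      rw [← h] at hle
      rw [h0] at hle
      linarith
  have hge : ∀ j, ψ t₀ ≤ x t₀ j := by
    intro j
    have hcw : ContinuousWithinAt (fun s => x s j - ψ s) (Set.Ico 0 t₀) t₀ :=
      (((hcont j) t₀ ht₀Icc).sub hψcont.continuousWithinAt).mono
        (fun s hs => ⟨hs.1, hs.2.le.trans ht₀Icc.2⟩)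
    have htend : Tendsto (fun s => x s j - ψ s) (𝓝[<] t₀) (𝓝 (x t₀ j - ψ t₀)) := by
      rw [← nhdsWithin_Ico_eq_nhdsLT ht₀pos]
      exact hcw
    have hev : ∀ᶠ s in 𝓝[<] t₀, 0 ≤ x s j - ψ s := by
      filter_upwards [Ioo_mem_nhdsLT_of_mem (Set.mem_Ioc.2 ⟨ht₀pos, le_rfl⟩)] with s hs
      exact sub_nonneg.2 (hlow s hs.1.le hs.2 j).le
    have := ge_of_tendsto htend hev
    linarith
  set a := ε * Real.exp (2*K*t₀) with hadef
  have ha : 0 < a := by positivity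
  have hψt₀ : ψ t₀ = -a := rfl
  have hxi : x t₀ i₀ = -a := le_antisymm (hψt₀ ▸ hle) (hψt₀ ▸ hge i₀)
  have hfb : -(K * a) ≤ f t₀ i₀ :=
    hH t₀ ht₀Icc a ha (fun j => hψt₀ ▸ hge j) i₀ hxi
  have hxd : HasDerivAt (fun s => x s i₀) (f t₀ i₀) t₀ :=
    (hderiv t₀ ht₀Icc i₀).hasDerivAt (Ici_mem_nhds ht₀pos)
  have hψd : HasDerivAt ψ (-(ε * (Real.exp (2*K*t₀) * (2*K)))) t₀ := by
    have h1 : HasDerivAt (fun s : ℝ => 2*K*s) (2*K) t₀ := by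
      simpa using (hasDerivAt_id t₀).const_mul (2*K)
    have h2 := (Real.hasDerivAt_exp (2*K*t₀)).comp t₀ h1
    exact (h2.const_mul ε).neg
  have hgd : HasDerivAt (fun s => x s i₀ - ψ s)
      (f t₀ i₀ - -(ε * (Real.exp (2*K*t₀) * (2*K)))) t₀ := hxd.sub hψd
  have hd : 0 < f t₀ i₀ - -(ε * (Real.exp (2*K*t₀) * (2*K))) := by
    have h3 : ε * Real.exp (2*K*t₀) = a := rfl
    nlinarith [hfb, ha, hK]
  rw [hasDerivAt_iff_tendsto_slope] at hgd
  have hev2 : ∀ᶠ s in 𝓝[<] t₀, 0 < slope (fun s => x s i₀ - ψ s) t₀ s := by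
    have := hgd.eventually (eventually_gt_nhds hd)
    exact this.filter_mono (nhdsWithin_mono t₀ (fun s hs => by
      simp only [Set.mem_compl_iff, Set.mem_singleton_iff]
      exact ne_of_lt hs))
  have hev3 : ∀ᶠ s in 𝓝[<] t₀, s ∈ Set.Ioo 0 t₀ :=
    eventually_mem_set.2 (Ioo_mem_nhdsLT_of_mem (Set.mem_Ioc.2 ⟨ht₀pos, le_rfl⟩))
  obtain ⟨s, hs1, hs2⟩ := (hev2.and hev3).exists
  have hgs : 0 < x s i₀ - ψ s := sub_pos.2 (hlow s hs2.1.le hs2.2 i₀)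
  have hgt₀ : x t₀ i₀ - ψ t₀ = 0 := by rw [hxi, hψt₀]; ring
  rw [slope_def_field] at hs1
  have : (x s i₀ - ψ s - (x t₀ i₀ - ψ t₀)) / (s - t₀) < 0 :=
    div_neg_of_pos_of_neg (by rw [hgt₀]; linarith) (by linarith [hs2.2])
  rw [show ((fun s => x s i₀ - ψ s) s - (fun s => x s i₀ - ψ s) t₀)
    = (x s i₀ - ψ s - (x t₀ i₀ - ψ t₀)) from rfl] at hs1
  linarith

/-- Positive invariance of the nonnegative orthant for the cholera
metapopulation model. -/
theorem cholera_positive_invariance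
    (n : ℕ) (hn : 1 ≤ n)
    (b dH v ε γ δ ζ dC βI βW : Fin n → ℝ)
    (hb : ∀ i, 0 ≤ b i) (hdH : ∀ i, 0 < dH i) (hv : ∀ i, 0 ≤ v i)
    (hε : ∀ i, 0 ≤ ε i) (hγ : ∀ i, 0 ≤ γ i) (hδ : ∀ i, 0 ≤ δ i)
    (hζ : ∀ i, 0 ≤ ζ i) (hdC : ∀ i, 0 < dC i)
    (hβI : ∀ i, 0 ≤ βI i) (hβW : ∀ i, 0 ≤ βW i)
    (MS MI MR MW : Matrix (Fin n) (Fin n) ℝ)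
    (hMSoff : ∀ i j, i ≠ j → 0 ≤ MS i j) (hMScol : ∀ j, ∑ i, MS i j = 0)
    (hMIoff : ∀ i j, i ≠ j → 0 ≤ MI i j) (hMIcol : ∀ j, ∑ i, MI i j = 0)
    (hMRoff : ∀ i j, i ≠ j → 0 ≤ MR i j) (hMRcol : ∀ j, ∑ i, MR i j = 0)
    (hMWoff : ∀ i j, i ≠ j → 0 ≤ MW i j) (hMWcol : ∀ j, ∑ i, MW i j = 0)
    (S I R W : ℝ → Fin n → ℝ)
    (hS : ∀ t, 0 ≤ t → ∀ i, HasDerivWithinAt (fun τ => S τ i)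
      (b i + ε i * R t i - (βI i * I t i + βW i * W t i) * S t i
        - (v i + dH i) * S t i + ∑ j, MS i j * S t j) (Set.Ici (0:ℝ)) t)
    (hI : ∀ t, 0 ≤ t → ∀ i, HasDerivWithinAt (fun τ => I τ i)
      ((βI i * I t i + βW i * W t i) * S t i - (γ i + δ i + dH i) * I t i
        + ∑ j, MI i j * I t j) (Set.Ici (0:ℝ)) t)
    (hR : ∀ t, 0 ≤ t → ∀ i, HasDerivWithinAt (fun τ => R τ i)
      (γ i * I t i + v i * S t i - (ε i + dH i) * R t i
        + ∑ j, MR i j * R t j) (Set.Ici (0:ℝ)) t)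
    (hW : ∀ t, 0 ≤ t → ∀ i, HasDerivWithinAt (fun τ => W τ i)
      (ζ i * I t i - dC i * W t i + ∑ j, MW i j * W t j) (Set.Ici (0:ℝ)) t)
    (hS0 : ∀ i, 0 < S 0 i) (hI0 : ∀ i, 0 ≤ I 0 i)
    (hR0 : ∀ i, 0 ≤ R 0 i) (hW0 : ∀ i, 0 ≤ W 0 i) :
    ∀ t, 0 ≤ t → ∀ i, 0 < S t i ∧ 0 ≤ I t i ∧ 0 ≤ R t i ∧ 0 ≤ W t i := by
  intro t ht
  haveI : Nonempty (Fin n) := ⟨⟨0, hn⟩⟩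
  -- continuity of all components on [0, t]
  have hScont : ∀ i, ContinuousOn (fun τ => S τ i) (Set.Icc 0 t) := fun i s hs =>
    ((hS s hs.1 i).continuousWithinAt).mono Set.Icc_subset_Ici_self
  have hIcont : ∀ i, ContinuousOn (fun τ => I τ i) (Set.Icc 0 t) := fun i s hs =>
    ((hI s hs.1 i).continuousWithinAt).mono Set.Icc_subset_Ici_self
  have hRcont : ∀ i, ContinuousOn (fun τ => R τ i) (Set.Icc 0 t) := fun i s hs =>
    ((hR s hs.1 i).continuousWithinAt).mono Set.Icc_subset_Ici_self
  have hWcont : ∀ i, ContinuousOn (fun τ => W τ i) (Set.Icc 0 t) := fun i s hs =>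
    ((hW s hs.1 i).continuousWithinAt).mono Set.Icc_subset_Ici_self
  -- a uniform bound C on [0, t]
  obtain ⟨CS, hCS⟩ := isCompact_Icc.exists_bound_of_continuousOn (continuousOn_pi.2 hScont)
  obtain ⟨CI, hCI⟩ := isCompact_Icc.exists_bound_of_continuousOn (continuousOn_pi.2 hIcont)
  obtain ⟨CR, hCR⟩ := isCompact_Icc.exists_bound_of_continuousOn (continuousOn_pi.2 hRcont)
  obtain ⟨CW, hCW⟩ := isCompact_Icc.exists_bound_of_continuousOn (continuousOn_pi.2 hWcont)
  set C : ℝ := max 0 (max (max CS CI) (max CR CW)) with hCdef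
  have hC0 : 0 ≤ C := le_max_left _ _
  have hSB : ∀ τ ∈ Set.Icc (0:ℝ) t, ∀ i, |S τ i| ≤ C := by
    intro τ hτ i
    have h1 : ‖S τ i‖ ≤ ‖fun j => S τ j‖ := norm_le_pi_norm (fun j => S τ j) i
    have h2 := hCS τ hτ
    have h3 : CS ≤ C := le_max_of_le_right (le_max_of_le_left (le_max_left _ _))
    rw [Real.norm_eq_abs] at h1
    exact h1.trans (h2.trans h3)
  have hIB : ∀ τ ∈ Set.Icc (0:ℝ) t, ∀ i, |I τ i| ≤ C := by
    intro τ hτ i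
    have h1 : ‖I τ i‖ ≤ ‖fun j => I τ j‖ := norm_le_pi_norm (fun j => I τ j) i
    have h2 := hCI τ hτ
    have h3 : CI ≤ C := le_max_of_le_right (le_max_of_le_left (le_max_right _ _))
    rw [Real.norm_eq_abs] at h1
    exact h1.trans (h2.trans h3)
  have hRB : ∀ τ ∈ Set.Icc (0:ℝ) t, ∀ i, |R τ i| ≤ C := by
    intro τ hτ i
    have h1 : ‖R τ i‖ ≤ ‖fun j => R τ j‖ := norm_le_pi_norm (fun j => R τ j) i
    have h2 := hCR τ hτ
    have h3 : CR ≤ C := le_max_of_le_right (le_max_of_le_right (le_max_left _ _))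
    rw [Real.norm_eq_abs] at h1
    exact h1.trans (h2.trans h3)
  have hWB : ∀ τ ∈ Set.Icc (0:ℝ) t, ∀ i, |W τ i| ≤ C := by
    intro τ hτ i
    have h1 : ‖W τ i‖ ≤ ‖fun j => W τ j‖ := norm_le_pi_norm (fun j => W τ j) i
    have h2 := hCW τ hτ
    have h3 : CW ≤ C := le_max_of_le_right (le_max_of_le_right (le_max_right _ _))
    rw [Real.norm_eq_abs] at h1
    exact h1.trans (h2.trans h3)
  -- the quasipositivity constant K
  have hA0 : ∀ i : Fin n, 0 ≤ ε i + γ i + v i + ζ i + (βI i + βW i) * C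
      + ∑ j, (|MS i j| + |MI i j| + |MR i j| + |MW i j|) := by
    intro i
    have h1 : 0 ≤ (βI i + βW i) * C := mul_nonneg (by linarith [hβI i, hβW i]) hC0
    have h2 : 0 ≤ ∑ j, (|MS i j| + |MI i j| + |MR i j| + |MW i j|) :=
      Finset.sum_nonneg fun j _ => by positivity
    linarith [hε i, hγ i, hv i, hζ i]
  set K : ℝ := 1 + ∑ i, (ε i + γ i + v i + ζ i + (βI i + βW i) * C
      + ∑ j, (|MS i j| + |MI i j| + |MR i j| + |MW i j|)) with hKdef
  have hK : 0 < K := by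
    have := Finset.sum_nonneg (fun i (_ : i ∈ Finset.univ) => hA0 i)
    rw [hKdef]; linarith
  have hAK : ∀ i : Fin n, ε i + γ i + v i + ζ i + (βI i + βW i) * C
      + (∑ j, (|MS i j| + |MI i j| + |MR i j| + |MW i j|)) + 1 ≤ K := by
    intro i
    have := Finset.single_le_sum (f := fun i => ε i + γ i + v i + ζ i + (βI i + βW i) * C
      + ∑ j, (|MS i j| + |MI i j| + |MR i j| + |MW i j|))
      (fun j _ => hA0 j) (Finset.mem_univ i)
    rw [hKdef]; linarith
  -- apply the generic invariance lemma
  have key : ∀ τ ∈ Set.Icc (0:ℝ) t, ∀ k : (Fin n ⊕ Fin n) ⊕ (Fin n ⊕ Fin n),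
      0 ≤ Sum.elim (Sum.elim (S τ) (I τ)) (Sum.elim (R τ) (W τ)) k := by
    apply quasipos_invariance (T := t) (K := K) hK
      (x := fun τ => Sum.elim (Sum.elim (S τ) (I τ)) (Sum.elim (R τ) (W τ)))
      (f := fun τ => Sum.elim (Sum.elim
        (fun i => b i + ε i * R τ i - (βI i * I τ i + βW i * W τ i) * S τ i
          - (v i + dH i) * S τ i + ∑ j, MS i j * S τ j)
        (fun i => (βI i * I τ i + βW i * W τ i) * S τ i - (γ i + δ i + dH i) * I τ i
          + ∑ j, MI i j * I τ j))
        (Sum.elim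
        (fun i => γ i * I τ i + v i * S τ i - (ε i + dH i) * R τ i + ∑ j, MR i j * R τ j)
        (fun i => ζ i * I τ i - dC i * W τ i + ∑ j, MW i j * W τ j)))
    · -- derivatives
      intro τ hτ k
      rcases k with (i | i) | (i | i) <;>
        simp only [Sum.elim_inl, Sum.elim_inr]
      · exact hS τ hτ.1 i
      · exact hI τ hτ.1 i
      · exact hR τ hτ.1 i
      · exact hW τ hτ.1 i
    · -- initial conditions
      intro k
      rcases k with (i | i) | (i | i) <;> simp only [Sum.elim_inl, Sum.elim_inr]
      · exact (hS0 i).le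
      · exact hI0 i
      · exact hR0 i
      · exact hW0 i
    · -- quasipositivity estimate
      intro τ hτ a ha hge k hk
      have hgeS : ∀ j, -a ≤ S τ j := fun j => hge (Sum.inl (Sum.inl j))
      have hgeI : ∀ j, -a ≤ I τ j := fun j => hge (Sum.inl (Sum.inr j))
      have hgeR : ∀ j, -a ≤ R τ j := fun j => hge (Sum.inr (Sum.inl j))
      have hgeW : ∀ j, -a ≤ W τ j := fun j => hge (Sum.inr (Sum.inr j))
      rcases k with (i | i) | (i | i) <;> simp only [Sum.elim_inl, Sum.elim_inr] at hk ⊢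
      · -- S equation
        have hsum := row_sum_lb (fun j => MS i j) (S τ) i a ha.le
          (fun j hj => hMSoff i j (Ne.symm hj)) hgeS hk
        have h1 : ε i * (-a) ≤ ε i * R τ i := mul_le_mul_of_nonneg_left (hgeR i) (hε i)
        have h2 : βI i * (-C) ≤ βI i * I τ i :=
          mul_le_mul_of_nonneg_left (abs_le.1 (hIB τ hτ i)).1 (hβI i)
        have h3 : βW i * (-C) ≤ βW i * W τ i :=
          mul_le_mul_of_nonneg_left (abs_le.1 (hWB τ hτ i)).1 (hβW i)
        have h2a : a * (βI i * (-C)) ≤ a * (βI i * I τ i) :=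
          mul_le_mul_of_nonneg_left h2 ha.le
        have h3a : a * (βW i * (-C)) ≤ a * (βW i * W τ i) :=
          mul_le_mul_of_nonneg_left h3 ha.le
        have hE1 : (βI i * I τ i + βW i * W τ i) * S τ i
            = -(a * (βI i * I τ i) + a * (βW i * W τ i)) := by rw [hk]; ring
        have hE2 : (v i + dH i) * S τ i = -((v i + dH i) * a) := by rw [hk]; ring
        have h5 : 0 ≤ (v i + dH i) * a :=
          mul_nonneg (by linarith [hv i, (hdH i).le]) ha.le
        have hKi : ε i + (βI i + βW i) * C + ∑ j, |MS i j| ≤ K := by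
          have h4 : (∑ j, |MS i j|)
              ≤ ∑ j, (|MS i j| + |MI i j| + |MR i j| + |MW i j|) :=
            Finset.sum_le_sum (fun j _ => by
              linarith [abs_nonneg (MS i j), abs_nonneg (MI i j),
                abs_nonneg (MR i j), abs_nonneg (MW i j)])
          linarith [hAK i, hγ i, hv i, hζ i]
        have hKa : (ε i + (βI i + βW i) * C + ∑ j, |MS i j|) * a ≤ K * a :=
          mul_le_mul_of_nonneg_right hKi ha.le
        linarith [hb i]
      · -- I equation
        have hsum := row_sum_lb (fun j => MI i j) (I τ) i a ha.le
          (fun j hj => hMIoff i j (Ne.symm hj)) hgeI hk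
        have hp1 : -(a*C) ≤ I τ i * S τ i :=
          mul_lb_aux ha.le (hgeI i) (hIB τ hτ i) (hgeS i) (hSB τ hτ i)
        have hp2 : -(a*C) ≤ W τ i * S τ i :=
          mul_lb_aux ha.le (hgeW i) (hWB τ hτ i) (hgeS i) (hSB τ hτ i)
        have hq1 : βI i * (-(a*C)) ≤ βI i * (I τ i * S τ i) :=
          mul_le_mul_of_nonneg_left hp1 (hβI i)
        have hq2 : βW i * (-(a*C)) ≤ βW i * (W τ i * S τ i) :=
          mul_le_mul_of_nonneg_left hp2 (hβW i)
        have hE1 : (γ i + δ i + dH i) * I τ i = -((γ i + δ i + dH i) * a) := by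
          rw [hk]; ring
        have h5 : 0 ≤ (γ i + δ i + dH i) * a :=
          mul_nonneg (by linarith [hγ i, hδ i, (hdH i).le]) ha.le
        have hKi : (βI i + βW i) * C + ∑ j, |MI i j| ≤ K := by
          have h4 : (∑ j, |MI i j|)
              ≤ ∑ j, (|MS i j| + |MI i j| + |MR i j| + |MW i j|) :=
            Finset.sum_le_sum (fun j _ => by
              linarith [abs_nonneg (MS i j), abs_nonneg (MI i j),
                abs_nonneg (MR i j), abs_nonneg (MW i j)])
          linarith [hAK i, hε i, hγ i, hv i, hζ i]
        have hKa : ((βI i + βW i) * C + ∑ j, |MI i j|) * a ≤ K * a :=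
          mul_le_mul_of_nonneg_right hKi ha.le
        nlinarith [hsum, hq1, hq2, hKa, h5, hE1]
      · -- R equation
        have hsum := row_sum_lb (fun j => MR i j) (R τ) i a ha.le
          (fun j hj => hMRoff i j (Ne.symm hj)) hgeR hk
        have h1 : γ i * (-a) ≤ γ i * I τ i := mul_le_mul_of_nonneg_left (hgeI i) (hγ i)
        have h2 : v i * (-a) ≤ v i * S τ i := mul_le_mul_of_nonneg_left (hgeS i) (hv i)
        have hE1 : (ε i + dH i) * R τ i = -((ε i + dH i) * a) := by rw [hk]; ring
        have h5 : 0 ≤ (ε i + dH i) * a :=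
          mul_nonneg (by linarith [hε i, (hdH i).le]) ha.le
        have hKi : γ i + v i + ∑ j, |MR i j| ≤ K := by
          have h4 : (∑ j, |MR i j|)
              ≤ ∑ j, (|MS i j| + |MI i j| + |MR i j| + |MW i j|) :=
            Finset.sum_le_sum (fun j _ => by
              linarith [abs_nonneg (MS i j), abs_nonneg (MI i j),
                abs_nonneg (MR i j), abs_nonneg (MW i j)])
          have h6 : 0 ≤ (βI i + βW i) * C := mul_nonneg (by linarith [hβI i, hβW i]) hC0
          linarith [hAK i, hε i, hζ i]
        have hKa : (γ i + v i + ∑ j, |MR i j|) * a ≤ K * a :=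
          mul_le_mul_of_nonneg_right hKi ha.le
        linarith
      · -- W equation
        have hsum := row_sum_lb (fun j => MW i j) (W τ) i a ha.le
          (fun j hj => hMWoff i j (Ne.symm hj)) hgeW hk
        have h1 : ζ i * (-a) ≤ ζ i * I τ i := mul_le_mul_of_nonneg_left (hgeI i) (hζ i)
        have hE1 : dC i * W τ i = -(dC i * a) := by rw [hk]; ring
        have h5 : 0 ≤ dC i * a := mul_nonneg (hdC i).le ha.le
        have hKi : ζ i + ∑ j, |MW i j| ≤ K := by
          have h4 : (∑ j, |MW i j|)
              ≤ ∑ j, (|MS i j| + |MI i j| + |MR i j| + |MW i j|) :=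
            Finset.sum_le_sum (fun j _ => by
              linarith [abs_nonneg (MS i j), abs_nonneg (MI i j),
                abs_nonneg (MR i j), abs_nonneg (MW i j)])
          have h6 : 0 ≤ (βI i + βW i) * C := mul_nonneg (by linarith [hβI i, hβW i]) hC0
          linarith [hAK i, hε i, hγ i, hv i]
        have hKa : (ζ i + ∑ j, |MW i j|) * a ≤ K * a :=
          mul_le_mul_of_nonneg_right hKi ha.le
        linarith
  have hSn : ∀ τ ∈ Set.Icc (0:ℝ) t, ∀ i, 0 ≤ S τ i :=
    fun τ hτ i => key τ hτ (Sum.inl (Sum.inl i))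
  have hIn : ∀ τ ∈ Set.Icc (0:ℝ) t, ∀ i, 0 ≤ I τ i :=
    fun τ hτ i => key τ hτ (Sum.inl (Sum.inr i))
  have hRn : ∀ τ ∈ Set.Icc (0:ℝ) t, ∀ i, 0 ≤ R τ i :=
    fun τ hτ i => key τ hτ (Sum.inr (Sum.inl i))
  have hWn : ∀ τ ∈ Set.Icc (0:ℝ) t, ∀ i, 0 ≤ W τ i :=
    fun τ hτ i => key τ hτ (Sum.inr (Sum.inr i))
  intro i
  refine ⟨?_, hIn t ⟨ht, le_rfl⟩ i, hRn t ⟨ht, le_rfl⟩ i, hWn t ⟨ht, le_rfl⟩ i⟩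
  -- strict positivity of S via an integrating factor
  set L : ℝ := (βI i + βW i) * C + v i + dH i + |MS i i| with hLdef
  have humono : MonotoneOn (fun τ => S τ i * Real.exp (L * τ)) (Set.Icc 0 t) := by
    apply monotoneOn_of_hasDerivWithinAt_nonneg (f' := fun τ =>
      (b i + ε i * R τ i - (βI i * I τ i + βW i * W τ i) * S τ i
        - (v i + dH i) * S τ i + ∑ j, MS i j * S τ j) * Real.exp (L * τ)
      + S τ i * (Real.exp (L * τ) * L)) (convex_Icc 0 t)
    · exact (hScont i).mul (Real.continuous_exp.comp
        (continuous_const.mul continuous_id)).continuousOn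
    · intro τ hτ
      rw [interior_Icc] at hτ
      have hsub : interior (Set.Icc (0:ℝ) t) ⊆ Set.Ici (0:ℝ) := by
        rw [interior_Icc]; exact fun s hs => hs.1.le
      have hd1 : HasDerivWithinAt (fun σ => S σ i)
          (b i + ε i * R τ i - (βI i * I τ i + βW i * W τ i) * S τ i
            - (v i + dH i) * S τ i + ∑ j, MS i j * S τ j)
          (interior (Set.Icc 0 t)) τ := (hS τ hτ.1.le i).mono hsub
      have hd2 : HasDerivAt (fun σ : ℝ => Real.exp (L * σ)) (Real.exp (L * τ) * L) τ := by
        have hgl : HasDerivAt (fun σ : ℝ => L * σ) L τ := by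
          simpa using (hasDerivAt_id τ).const_mul L
        exact (Real.hasDerivAt_exp (L * τ)).comp τ hgl
      exact hd1.mul (hd2.hasDerivWithinAt)
    · intro τ hτ
      rw [interior_Icc] at hτ
      have hτIcc : τ ∈ Set.Icc (0:ℝ) t := ⟨hτ.1.le, hτ.2.le⟩
      have hE : (0:ℝ) < Real.exp (L * τ) := Real.exp_pos _
      have hcore : 0 ≤ (b i + ε i * R τ i - (βI i * I τ i + βW i * W τ i) * S τ i
          - (v i + dH i) * S τ i + ∑ j, MS i j * S τ j) + L * S τ i := by
        have hq1 : βI i * I τ i ≤ βI i * C :=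
          mul_le_mul_of_nonneg_left (abs_le.1 (hIB τ hτIcc i)).2 (hβI i)
        have hq2 : βW i * W τ i ≤ βW i * C :=
          mul_le_mul_of_nonneg_left (abs_le.1 (hWB τ hτIcc i)).2 (hβW i)
        have hq : (βI i * I τ i + βW i * W τ i) * S τ i
            ≤ ((βI i + βW i) * C) * S τ i :=
          mul_le_mul_of_nonneg_right (by linarith) (hSn τ hτIcc i)
        have hsplit : ∑ j, MS i j * S τ j
            = MS i i * S τ i + ∑ j ∈ Finset.univ.erase i, MS i j * S τ j :=
          (Finset.add_sum_erase _ _ (Finset.mem_univ i)).symm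
        have herase : 0 ≤ ∑ j ∈ Finset.univ.erase i, MS i j * S τ j :=
          Finset.sum_nonneg fun j hj =>
            mul_nonneg (hMSoff i j (Ne.symm (Finset.mem_erase.1 hj).1)) (hSn τ hτIcc j)
        have hms : (-(|MS i i|)) * S τ i ≤ MS i i * S τ i :=
          mul_le_mul_of_nonneg_right (neg_abs_le (MS i i)) (hSn τ hτIcc i)
        have hεR : 0 ≤ ε i * R τ i := mul_nonneg (hε i) (hRn τ hτIcc i)
        rw [hLdef]
        nlinarith [hb i]
      nlinarith [mul_nonneg hcore hE.le]
  have h1 : S 0 i * Real.exp (L * 0) ≤ S t i * Real.exp (L * t) :=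
    humono ⟨le_rfl, ht⟩ ⟨ht, le_rfl⟩ ht
  rw [mul_zero, Real.exp_zero, mul_one] at h1
  nlinarith [Real.exp_pos (L * t), hS0 i]
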